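/- The quotient of the group W₁ by its center Z(W₁) is isomorphic to the symmetric group S₄ on four letters (in particular W₁/Z(W₁) has order 24). -/

import Mathlib

noncomputable section

abbrev Mat4 := Matrix (Fin 4) (Fin 4) ℂ

def s1 : Mat4 := !![0,1,0,0; 1,0,0,0; 0,0,1,0; 0,0,0,-1]
def s2 : Mat4 := !![1,0,0,0; 0,0,1,0; 0,1,0,0; 0,0,0,-1]
def s3 : Mat4 := !![-1,0,0,0; 0,1,0,0; 0,0,0,1; 0,0,1,0]

/-- The subgroup `W₁` of `GL₄(ℂ)` generated by `s₁, s₂, s₃`. -/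
def W1 : Subgroup (Matrix.GeneralLinearGroup (Fin 4) ℂ) :=
  Subgroup.closure {w | (w : Mat4) ∈ ({s1, s2, s3} : Set Mat4)}

namespace Stmt13

abbrev GL4 := Matrix.GeneralLinearGroup (Fin 4) ℂ

/-- The diagonal idempotents `E i`. -/
def E (i : Fin 4) : Mat4 := Matrix.diagonal (fun j => if j = i then 1 else 0)

lemma conjE (M N : Mat4) (i a b : Fin 4) : (M * E i * N) a b = M a i * N i b := by
  simp [E, Matrix.mul_apply, Matrix.diagonal, Fin.sum_univ_four]

lemma E_apply (i a b : Fin 4) : E i a b = if a = b ∧ a = i then 1 else 0 := by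
  simp [E, Matrix.diagonal]
  aesop

lemma E_inj {i j : Fin 4} (h : E i = E j) : i = j := by
  have := congrFun (congrFun h i) i
  simp [E_apply] at this
  by_contra hne
  simp [hne] at this

/-- an invariant quartic form -/
def F (x : Fin 4 → ℂ) : ℂ :=
  - (x 1 * x 2 * x 3^2) - (x 1 * x 2^2 * x 3) + (x 1^2 * x 2 * x 3)
  - (x 0 * x 2 * x 3^2) + (x 0 * x 2^2 * x 3) - (x 0 * x 1 * x 3^2)
  + (x 0 * x 1 * x 2^2) - (x 0 * x 1^2 * x 3) + (x 0 * x 1^2 * x 2)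
  - (x 0^2 * x 2 * x 3) + (x 0^2 * x 1 * x 3) + (x 0^2 * x 1 * x 2)

/-- The subgroup of `GL₄` preserving `F`. -/
def K : Subgroup GL4 where
  carrier := {g | ∀ x, F ((g : Mat4).mulVec x) = F x}
  one_mem' := by intro x; simp
  mul_mem' := by
    intro g h hg hh x
    have hco : ((g * h : GL4) : Mat4) = (g : Mat4) * (h : Mat4) := rfl
    rw [hco, ← Matrix.mulVec_mulVec, hg, hh]
  inv_mem' := by
    intro g hg x
    have h1 : (g : Mat4).mulVec ((↑(g⁻¹) : Mat4).mulVec x) = x := by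
      rw [Matrix.mulVec_mulVec]
      have : (g : Mat4) * (↑(g⁻¹) : Mat4) = 1 := Units.mul_inv g
      rw [this, Matrix.one_mulVec]
    calc F ((↑(g⁻¹) : Mat4).mulVec x)
        = F ((g : Mat4).mulVec ((↑(g⁻¹) : Mat4).mulVec x)) := (hg _).symm
      _ = F x := by rw [h1]

/-- The subgroup of `GL₄` permuting the `E i` by conjugation. -/
def P : Subgroup GL4 where
  carrier := {g | ∃ σ : Equiv.Perm (Fin 4),
    ∀ i, (g : Mat4) * E i * (↑(g⁻¹) : Mat4) = E (σ i)}
  one_mem' := ⟨1, by intro i; simp⟩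
  mul_mem' := by
    rintro g h ⟨σ, hσ⟩ ⟨τ, hτ⟩
    refine ⟨σ * τ, fun i => ?_⟩
    have hinv : (↑((g * h)⁻¹) : Mat4) = (↑(h⁻¹) : Mat4) * (↑(g⁻¹) : Mat4) := by
      rw [mul_inv_rev]; rfl
    have hmul : ((g * h : GL4) : Mat4) = (g : Mat4) * (h : Mat4) := rfl
    calc ((g * h : GL4) : Mat4) * E i * (↑((g * h)⁻¹) : Mat4)
        = (g : Mat4) * ((h : Mat4) * E i * (↑(h⁻¹) : Mat4)) * (↑(g⁻¹) : Mat4) := by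
          rw [hinv, hmul]; noncomm_ring
      _ = (g : Mat4) * E (τ i) * (↑(g⁻¹) : Mat4) := by rw [hτ]
      _ = E (σ (τ i)) := hσ _
      _ = E ((σ * τ) i) := rfl
  inv_mem' := by
    rintro g ⟨σ, hσ⟩
    refine ⟨σ⁻¹, fun i => ?_⟩
    have h1 : (↑(g⁻¹) : Mat4) * E (σ (σ⁻¹ i)) * (g : Mat4) = E (σ⁻¹ i) := by
      rw [← hσ (σ⁻¹ i)]
      have hgi : (↑(g⁻¹) : Mat4) * (g : Mat4) = 1 := Units.inv_mul g
      have hig : (g : Mat4) * (↑(g⁻¹) : Mat4) = 1 := Units.mul_inv g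
      calc (↑(g⁻¹) : Mat4) * ((g : Mat4) * E (σ⁻¹ i) * (↑(g⁻¹) : Mat4)) * (g : Mat4)
          = ((↑(g⁻¹) : Mat4) * (g : Mat4)) * E (σ⁻¹ i) * ((↑(g⁻¹) : Mat4) * (g : Mat4)) := by
            noncomm_ring
        _ = E (σ⁻¹ i) := by rw [hgi]; simp
    have h2 : σ (σ⁻¹ i) = i := Equiv.apply_symm_apply σ i
    rw [h2] at h1
    have : (↑(g⁻¹⁻¹) : Mat4) = (g : Mat4) := by rw [inv_inv]
    rw [this]
    exact h1

lemma perm_unique {g : GL4} {σ τ : Equiv.Perm (Fin 4)}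
    (hσ : ∀ i, (g : Mat4) * E i * (↑(g⁻¹) : Mat4) = E (σ i))
    (hτ : ∀ i, (g : Mat4) * E i * (↑(g⁻¹) : Mat4) = E (τ i)) : σ = τ := by
  exact Equiv.ext fun i => E_inj ((hσ i).symm.trans (hτ i))

-- generator facts
lemma s1_sq : s1 * s1 = 1 := by
  ext a b; fin_cases a <;> fin_cases b <;>
    simp [s1, Matrix.mul_apply, Fin.sum_univ_four, Matrix.one_apply, Matrix.vecHead, Matrix.vecTail]

lemma s2_sq : s2 * s2 = 1 := by
  ext a b; fin_cases a <;> fin_cases b <;>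
    simp [s2, Matrix.mul_apply, Fin.sum_univ_four, Matrix.one_apply, Matrix.vecHead, Matrix.vecTail]

lemma s3_sq : s3 * s3 = 1 := by
  ext a b; fin_cases a <;> fin_cases b <;>
    simp [s3, Matrix.mul_apply, Fin.sum_univ_four, Matrix.one_apply, Matrix.vecHead, Matrix.vecTail]

def u1 : GL4 := ⟨s1, s1, s1_sq, s1_sq⟩
def u2 : GL4 := ⟨s2, s2, s2_sq, s2_sq⟩
def u3 : GL4 := ⟨s3, s3, s3_sq, s3_sq⟩

lemma u1_mem : u1 ∈ W1 := Subgroup.subset_closure (by left; rfl)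
lemma u2_mem : u2 ∈ W1 := Subgroup.subset_closure (by right; left; rfl)
lemma u3_mem : u3 ∈ W1 := Subgroup.subset_closure (by right; right; rfl)

lemma u1_conj : ∀ i, (u1 : Mat4) * E i * (↑(u1⁻¹) : Mat4) = E (Equiv.swap 0 1 i) := by
  intro i
  have hinv : (↑(u1⁻¹) : Mat4) = s1 := rfl
  have hc : (u1 : Mat4) = s1 := rfl
  rw [hinv, hc]
  ext a b
  rw [conjE]
  fin_cases i <;> fin_cases a <;> fin_cases b <;>
    simp [s1, E_apply, Equiv.swap_apply_def, Matrix.vecHead, Matrix.vecTail] <;> norm_num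

lemma u2_conj : ∀ i, (u2 : Mat4) * E i * (↑(u2⁻¹) : Mat4) = E (Equiv.swap 1 2 i) := by
  intro i
  have hinv : (↑(u2⁻¹) : Mat4) = s2 := rfl
  have hc : (u2 : Mat4) = s2 := rfl
  rw [hinv, hc]
  ext a b
  rw [conjE]
  fin_cases i <;> fin_cases a <;> fin_cases b <;>
    simp [s2, E_apply, Equiv.swap_apply_def, Matrix.vecHead, Matrix.vecTail] <;> norm_num

lemma u3_conj : ∀ i, (u3 : Mat4) * E i * (↑(u3⁻¹) : Mat4) = E (Equiv.swap 2 3 i) := by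
  intro i
  have hinv : (↑(u3⁻¹) : Mat4) = s3 := rfl
  have hc : (u3 : Mat4) = s3 := rfl
  rw [hinv, hc]
  ext a b
  rw [conjE]
  fin_cases i <;> fin_cases a <;> fin_cases b <;>
    simp [s3, E_apply, Equiv.swap_apply_def, Matrix.vecHead, Matrix.vecTail] <;> norm_num

lemma u1_F : ∀ x, F ((u1 : Mat4).mulVec x) = F x := by
  intro x
  have hc : (u1 : Mat4) = s1 := rfl
  rw [hc]
  simp [F, s1, Matrix.mulVec, dotProduct, Fin.sum_univ_four, Matrix.vecHead, Matrix.vecTail]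
  ring

lemma u2_F : ∀ x, F ((u2 : Mat4).mulVec x) = F x := by
  intro x
  have hc : (u2 : Mat4) = s2 := rfl
  rw [hc]
  simp [F, s2, Matrix.mulVec, dotProduct, Fin.sum_univ_four, Matrix.vecHead, Matrix.vecTail]
  ring

lemma u3_F : ∀ x, F ((u3 : Mat4).mulVec x) = F x := by
  intro x
  have hc : (u3 : Mat4) = s3 := rfl
  rw [hc]
  simp [F, s3, Matrix.mulVec, dotProduct, Fin.sum_univ_four, Matrix.vecHead, Matrix.vecTail]
  ring

lemma W1_le_PK : W1 ≤ P ⊓ K := by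
  rw [W1, Subgroup.closure_le]
  rintro w (h | h | h)
  · have hw : w = u1 := Units.ext h
    subst hw
    exact ⟨⟨Equiv.swap 0 1, u1_conj⟩, u1_F⟩
  · have hw : w = u2 := Units.ext h
    subst hw
    exact ⟨⟨Equiv.swap 1 2, u2_conj⟩, u2_F⟩
  · have hw : w = u3 := Units.ext h
    subst hw
    exact ⟨⟨Equiv.swap 2 3, u3_conj⟩, u3_F⟩

lemma W1_le_P : W1 ≤ P := le_trans W1_le_PK inf_le_left
lemma W1_le_K : W1 ≤ K := le_trans W1_le_PK inf_le_right

/-- The permutation associated to an element of `P`. -/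
def permOf (g : GL4) (hg : g ∈ P) : Equiv.Perm (Fin 4) := hg.choose

lemma permOf_spec (g : GL4) (hg : g ∈ P) :
    ∀ i, (g : Mat4) * E i * (↑(g⁻¹) : Mat4) = E (permOf g hg i) := hg.choose_spec

/-- The homomorphism `W₁ → S₄`. -/
def φ : W1 →* Equiv.Perm (Fin 4) where
  toFun w := permOf w (W1_le_P w.2)
  map_one' := by
    apply perm_unique (permOf_spec _ _)
    intro i; simp
  map_mul' := by
    intro v w
    apply perm_unique (permOf_spec _ _)
    intro i
    set σ := permOf (v : GL4) (W1_le_P v.2)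
    set τ := permOf (w : GL4) (W1_le_P w.2)
    have hσ := permOf_spec (v : GL4) (W1_le_P v.2)
    have hτ := permOf_spec (w : GL4) (W1_le_P w.2)
    have hinv : (↑(((v : GL4) * w)⁻¹) : Mat4) = (↑((w : GL4)⁻¹) : Mat4) * (↑((v : GL4)⁻¹) : Mat4) := by
      rw [mul_inv_rev]; rfl
    have hco : ((↑(v * w) : GL4) : Mat4) = ((v : GL4) : Mat4) * ((w : GL4) : Mat4) := rfl
    calc ((↑(v * w) : GL4) : Mat4) * E i * (↑((↑(v * w) : GL4)⁻¹) : Mat4)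
        = ((v : GL4) : Mat4) * (((w : GL4) : Mat4) * E i * (↑((w : GL4)⁻¹) : Mat4)) * (↑((v : GL4)⁻¹) : Mat4) := by
          rw [hco]
          have : ((↑(v * w) : GL4)⁻¹) = ((v : GL4) * (w : GL4))⁻¹ := rfl
          rw [this, hinv]
          noncomm_ring
      _ = ((v : GL4) : Mat4) * E (τ i) * (↑((v : GL4)⁻¹) : Mat4) := by rw [hτ]
      _ = E (σ (τ i)) := hσ _

lemma φ_u1 : φ ⟨u1, u1_mem⟩ = Equiv.swap 0 1 := perm_unique (permOf_spec _ _) u1_conj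
lemma φ_u2 : φ ⟨u2, u2_mem⟩ = Equiv.swap 1 2 := perm_unique (permOf_spec _ _) u2_conj
lemma φ_u3 : φ ⟨u3, u3_mem⟩ = Equiv.swap 2 3 := perm_unique (permOf_spec _ _) u3_conj

lemma swaps_generate :
    Subgroup.closure ({Equiv.swap 0 1, Equiv.swap 1 2, Equiv.swap 2 3} :
      Set (Equiv.Perm (Fin 4))) = ⊤ := by
  rw [eq_top_iff, ← Equiv.Perm.closure_isSwap, Subgroup.closure_le]
  rintro σ ⟨a, b, hab, rfl⟩
  set H := Subgroup.closure ({Equiv.swap 0 1, Equiv.swap 1 2, Equiv.swap 2 3} :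
      Set (Equiv.Perm (Fin 4)))
  have h01 : Equiv.swap (0 : Fin 4) 1 ∈ H := Subgroup.subset_closure (by left; rfl)
  have h12 : Equiv.swap (1 : Fin 4) 2 ∈ H := Subgroup.subset_closure (by right; left; rfl)
  have h23 : Equiv.swap (2 : Fin 4) 3 ∈ H := Subgroup.subset_closure (by right; right; rfl)
  have h02 : Equiv.swap (0 : Fin 4) 2 ∈ H := by
    have : Equiv.swap (0 : Fin 4) 2 = Equiv.swap 0 1 * Equiv.swap 1 2 * Equiv.swap 0 1 := by decide
    rw [this]; exact H.mul_mem (H.mul_mem h01 h12) h01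
  have h03 : Equiv.swap (0 : Fin 4) 3 ∈ H := by
    have : Equiv.swap (0 : Fin 4) 3 = Equiv.swap 2 3 * Equiv.swap 0 2 * Equiv.swap 2 3 := by decide
    rw [this]; exact H.mul_mem (H.mul_mem h23 h02) h23
  have h13 : Equiv.swap (1 : Fin 4) 3 ∈ H := by
    have : Equiv.swap (1 : Fin 4) 3 = Equiv.swap 2 3 * Equiv.swap 1 2 * Equiv.swap 2 3 := by decide
    rw [this]; exact H.mul_mem (H.mul_mem h23 h12) h23
  show Equiv.swap a b ∈ H
  fin_cases a <;> fin_cases b <;>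
    first
      | exact absurd rfl hab
      | assumption
      | (rw [Equiv.swap_comm]; assumption)

lemma φ_surj : Function.Surjective φ := by
  rw [← MonoidHom.range_eq_top, eq_top_iff, ← swaps_generate,
    Subgroup.closure_le]
  rintro σ (rfl | rfl | rfl)
  · exact ⟨⟨u1, u1_mem⟩, φ_u1⟩
  · exact ⟨⟨u2, u2_mem⟩, φ_u2⟩
  · exact ⟨⟨u3, u3_mem⟩, φ_u3⟩

set_option maxHeartbeats 2000000 in
lemma center_le_ker : Subgroup.center W1 ≤ φ.ker := by
  intro w hw
  have hc1 : φ w * Equiv.swap 0 1 = Equiv.swap 0 1 * φ w := by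
    rw [← φ_u1, ← map_mul, ← map_mul, Subgroup.mem_center_iff.mp hw]
  have hc2 : φ w * Equiv.swap 1 2 = Equiv.swap 1 2 * φ w := by
    rw [← φ_u2, ← map_mul, ← map_mul, Subgroup.mem_center_iff.mp hw]
  have hc3 : φ w * Equiv.swap 2 3 = Equiv.swap 2 3 * φ w := by
    rw [← φ_u3, ← map_mul, ← map_mul, Subgroup.mem_center_iff.mp hw]
  have key : ∀ σ : Equiv.Perm (Fin 4),
      σ * Equiv.swap 0 1 = Equiv.swap 0 1 * σ →
      σ * Equiv.swap 1 2 = Equiv.swap 1 2 * σ →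
      σ * Equiv.swap 2 3 = Equiv.swap 2 3 * σ → σ = 1 := by decide
  exact key (φ w) hc1 hc2 hc3

set_option maxHeartbeats 4000000 in
lemma ker_le_center : φ.ker ≤ Subgroup.center W1 := by
  intro w hw
  -- w conjugates each E i to itself, hence is diagonal
  have hspec := permOf_spec (w : GL4) (W1_le_P w.2)
  have h1 : φ w = 1 := hw
  rw [show φ w = permOf (w : GL4) (W1_le_P w.2) from rfl] at h1
  have hcomm : ∀ i, ((w : GL4) : Mat4) * E i = E i * ((w : GL4) : Mat4) := by
    intro i
    have := hspec i
    rw [h1] at this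
    simp only [Equiv.Perm.coe_one, id_eq] at this
    calc ((w : GL4) : Mat4) * E i
        = ((w : GL4) : Mat4) * E i * ((↑((w : GL4)⁻¹) : Mat4) * ((w : GL4) : Mat4)) := by
          rw [Units.inv_mul]; rw [mul_one]
      _ = (((w : GL4) : Mat4) * E i * (↑((w : GL4)⁻¹) : Mat4)) * ((w : GL4) : Mat4) := by
          noncomm_ring
      _ = E i * ((w : GL4) : Mat4) := by rw [this]
  set M : Mat4 := ((w : GL4) : Mat4) with hM
  have hdiag : ∀ a b : Fin 4, a ≠ b → M a b = 0 := by
    intro a b hab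
    have := congrFun (congrFun (hcomm b) a) b
    simp [Matrix.mul_apply, E_apply, Fin.sum_univ_four] at this
    -- (M * E b) a b = M a b ; (E b * M) a b = 0 since a ≠ b
    fin_cases a <;> fin_cases b <;> simp_all
  -- F-invariance
  have hF : ∀ x, F (M.mulVec x) = F x := W1_le_K w.2
  set A := M 0 0; set B := M 1 1; set C := M 2 2; set D := M 3 3
  have hmv : ∀ x : Fin 4 → ℂ, M.mulVec x = ![A * x 0, B * x 1, C * x 2, D * x 3] := by
    intro x
    funext i
    fin_cases i <;>
      simp [Matrix.mulVec, dotProduct, Fin.sum_univ_four, hdiag 0 1, hdiag 0 2,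
        hdiag 0 3, hdiag 1 0, hdiag 1 2, hdiag 1 3, hdiag 2 0, hdiag 2 1, hdiag 2 3,
        hdiag 3 0, hdiag 3 1, hdiag 3 2] <;> exact Or.inl rfl
  have hFval : ∀ x : Fin 4 → ℂ, F ![A * x 0, B * x 1, C * x 2, D * x 3] = F x := by
    intro x; rw [← hmv]; exact hF x
  -- evaluate at specific vectors
  have e1 := hFval ![1, 1, 1, 0]
  have e2 := hFval ![-1, 1, 1, 0]
  have e3 := hFval ![1, -1, 1, 0]
  have e4 := hFval ![1, 1, -1, 0]
  have e5 := hFval ![1, 1, 0, 1]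
  have e6 := hFval ![-1, 1, 0, 1]
  simp [F] at e1 e2 e3 e4 e5 e6
  have hAABC : A * A * B * C = 1 := by linear_combination (e1 + e2) / 2
  have hABBC : A * B * B * C = 1 := by linear_combination (e1 + e3) / 2
  have hABCC : A * B * C * C = 1 := by linear_combination (e1 + e4) / 2
  have hAABD : A * A * B * D = 1 := by linear_combination (e5 + e6) / 2
  have hAne : A ≠ 0 := by intro h; rw [h] at hAABC; simp at hAABC
  have hBne : B ≠ 0 := by intro h; rw [h] at hAABC; simp at hAABC
  have hCne : C ≠ 0 := by intro h; rw [h] at hAABC; simp at hAABC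
  have hAB : A = B := by
    have h : A * B * C * (A - B) = 0 := by linear_combination hAABC - hABBC
    rcases mul_eq_zero.mp h with h' | h'
    · exact absurd h' (by simp [hAne, hBne, hCne, mul_eq_zero])
    · exact sub_eq_zero.mp h'
  have hAC : A = C := by
    have h : A * B * C * (A - C) = 0 := by linear_combination hAABC - hABCC
    rcases mul_eq_zero.mp h with h' | h'
    · exact absurd h' (by simp [hAne, hBne, hCne, mul_eq_zero])
    · exact sub_eq_zero.mp h'
  have hCD : C = D := by
    have h : A * A * B * (C - D) = 0 := by linear_combination hAABC - hAABD
    rcases mul_eq_zero.mp h with h' | h'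
    · exact absurd h' (by simp [hAne, hBne, mul_eq_zero])
    · exact sub_eq_zero.mp h'
  -- M is the scalar matrix A • 1
  have hscal : M = A • (1 : Mat4) := by
    ext a b
    by_cases hab : a = b
    · subst hab
      fin_cases a
      · simp [Matrix.one_apply]; rfl
      · simp [Matrix.one_apply]; exact hAB.symm
      · simp [Matrix.one_apply]; exact hAC.symm
      · simp [Matrix.one_apply]; rw [hAC, hCD]
    · simp [Matrix.one_apply, hab, hdiag a b hab]
  -- hence w is central
  rw [Subgroup.mem_center_iff]
  intro v
  apply Subtype.ext
  apply Units.ext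
  show ((v : GL4) : Mat4) * M = M * ((v : GL4) : Mat4)
  rw [hscal]
  simp [smul_mul_assoc, mul_smul_comm]

lemma ker_eq_center : φ.ker = Subgroup.center W1 :=
  le_antisymm ker_le_center center_le_ker

end Stmt13

/-- `W₁ / Z(W₁)` is isomorphic to the symmetric group `S₄`
(in particular it has order 24). -/
theorem stmt_13 :
    Nonempty ((W1 ⧸ Subgroup.center W1) ≃* Equiv.Perm (Fin 4)) ∧
    Nat.card (W1 ⧸ Subgroup.center W1) = 24 := by
  have e : (W1 ⧸ Subgroup.center W1) ≃* Equiv.Perm (Fin 4) :=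
    (QuotientGroup.quotientMulEquivOfEq Stmt13.ker_eq_center.symm).trans
      (QuotientGroup.quotientKerEquivOfSurjective Stmt13.φ Stmt13.φ_surj)
  refine ⟨⟨e⟩, ?_⟩
  rw [Nat.card_congr e.toEquiv, Nat.card_eq_fintype_card, Fintype.card_perm]
  norm_num [Nat.factorial]
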